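/- arXiv:0706.0952 — 6 statements merged into one kernel-verified Lean document; each statement's English description precedes it below -/
import Mathlib

section
/- Let G be a group, V a finite-dimensional semisimple complex representation of G, and μ: G → ℂ× a character. If B and B' are two nondegenerate alternating bilinear forms on V, each satisfying B(gv,gw) = μ(g)B(v,w) (resp. for B'), then there exists T ∈ GL(V) commuting with the G-action such that B'(v,w) = B(Tv, Tw) for all v,w. -/
open Polynomial


private lemma sqrt_one_add_nilpotent {R : Type*} [CommRing R] (h2 : IsUnit (2 : R))
    {n : R} (hn : IsNilpotent n) : ∃ s : R, IsUnit s ∧ s * s = 1 + n := by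
  have hnil : ∀ k : ℕ, IsNilpotent (n ^ 2 ^ k) := by
    intro k
    obtain ⟨K, hK⟩ := hn
    exact ⟨K, by rw [← pow_mul, mul_comm, pow_mul, hK, zero_pow (by positivity)]⟩
  have key : ∀ k : ℕ, ∃ s c : R, IsUnit s ∧ s * s = 1 + n + c * n ^ (2 ^ k) := by
    intro k
    induction k with
    | zero => exact ⟨1, -1, isUnit_one, by ring⟩
    | succ k ih =>
      obtain ⟨s, c, hs, h⟩ := ih
      set w : R := ↑h2.unit⁻¹ with hw_def
      set u : R := ↑hs.unit⁻¹ with hu_def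
      have hw : 2 * w = 1 := h2.mul_val_inv
      have hu : s * u = 1 := hs.mul_val_inv
      refine ⟨s - c * n ^ 2 ^ k * w * u, c * c * (w * w) * (u * u), ?_, ?_⟩
      · have hd : s - c * n ^ 2 ^ k * w * u = s * (1 - u * (c * n ^ 2 ^ k * w * u)) := by
          have : s * (u * (c * n ^ 2 ^ k * w * u)) = (s * u) * (c * n ^ 2 ^ k * w * u) := by ring
          rw [mul_sub, mul_one, this, hu, one_mul]
        rw [hd]
        refine hs.mul (IsNilpotent.isUnit_one_sub ?_)
        have : u * (c * n ^ 2 ^ k * w * u) = n ^ 2 ^ k * (u * c * w * u) := by ring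
        rw [this]
        exact (Commute.all _ _).isNilpotent_mul_right (hnil k)
      · have hpow : n ^ 2 ^ (k + 1) = n ^ 2 ^ k * n ^ 2 ^ k := by
          rw [← pow_add]
          congr 1
          omega
        rw [hpow]
        linear_combination h + (-(c * n ^ 2 ^ k)) * hw + (-(2 * c * n ^ 2 ^ k * w)) * hu
  obtain ⟨K, hK⟩ := hn
  obtain ⟨s, c, hs, h⟩ := key K
  refine ⟨s, hs, ?_⟩
  have hz : n ^ 2 ^ K = 0 := by
    have hle : K ≤ 2 ^ K := Nat.le_of_lt (Nat.lt_two_pow_self)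
    calc n ^ 2 ^ K = n ^ K * n ^ (2 ^ K - K) := by rw [← pow_add]; congr 1; omega
    _ = 0 := by rw [hK, zero_mul]
  rw [h, hz, mul_zero, add_zero]

private noncomputable def csqrt (z : ℂ) : ℂ :=
  (IsAlgClosed.exists_pow_nat_eq z (n := 2) (by norm_num)).choose

private lemma csqrt_spec (z : ℂ) : csqrt z ^ 2 = z :=
  (IsAlgClosed.exists_pow_nat_eq z (n := 2) (by norm_num)).choose_spec

set_option maxHeartbeats 1000000 in
private lemma exists_aeval_sq {V : Type*} [AddCommGroup V] [Module ℂ V]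
    [FiniteDimensional ℂ V] (S : Module.End ℂ V) (hS : IsUnit S) :
    ∃ P : ℂ[X], aeval S P * aeval S P = S := by
  classical
  have hint : IsIntegral ℂ S := IsIntegral.of_finite ℂ S
  set m : ℂ[X] := minpoly ℂ S with hm_def
  have hm0 : m ≠ 0 := minpoly.ne_zero hint
  have hmaev : aeval S m = 0 := minpoly.aeval ℂ S
  -- constant coefficient nonzero
  have hc0 : m.coeff 0 ≠ 0 := by
    intro hc
    have hdivX : m = X * m.divX := by
      have := X_mul_divX_add m
      rw [hc, map_zero, add_zero] at this
      exact this.symm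
    have hdivX0 : m.divX ≠ 0 := by
      intro h0
      rw [h0, mul_zero] at hdivX
      exact hm0 hdivX
    have haev : S * aeval S m.divX = 0 := by
      have h := hmaev
      rw [hdivX, map_mul, aeval_X] at h
      exact h
    have haev0 : aeval S m.divX = 0 := by
      obtain ⟨u, hu⟩ := hS
      have h := congrArg (fun t => (↑u⁻¹ : Module.End ℂ V) * t) haev
      simpa [← mul_assoc, ← hu, Units.inv_mul] using h
    have hdvd : m ∣ m.divX := minpoly.dvd ℂ S haev0
    have hle : m.natDegree ≤ m.divX.natDegree := natDegree_le_of_dvd hdvd hdivX0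
    have hdeg := congrArg natDegree hdivX
    rw [natDegree_mul X_ne_zero hdivX0, natDegree_X] at hdeg
    omega
  -- the square root polynomial on the roots
  set p₀ : ℂ[X] := Lagrange.interpolate m.roots.toFinset id csqrt with hp₀
  set E : ℂ[X] := p₀ * p₀ - X with hE_def
  by_cases hE : E = 0
  · refine ⟨p₀, ?_⟩
    have h : p₀ * p₀ = X := sub_eq_zero.mp hE
    rw [← map_mul, h, aeval_X]
  · -- E vanishes on all roots of m
    have hroot : ∀ z ∈ m.roots, IsRoot E z := by
      intro z hz
      have hz' : z ∈ m.roots.toFinset := Multiset.mem_toFinset.mpr hz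
      have hev : eval z p₀ = csqrt z :=
        Lagrange.eval_interpolate_at_node csqrt (Set.injOn_id _) hz'
      simp only [IsRoot, hE_def, eval_sub, eval_mul, eval_X, hev]
      rw [← pow_two, csqrt_spec, sub_self]
    set K : ℕ := m.natDegree with hK_def
    have hdvd : m ∣ E ^ K := by
      have hsplit : m.Splits := IsAlgClosed.splits m
      have hmon : m.Monic := minpoly.monic hint
      have hfact : m = (m.roots.map fun a => X - C a).prod :=
        hsplit.eq_prod_roots_of_monic hmon
      have hle : m.roots ≤ (E ^ K).roots := by
        rw [Multiset.le_iff_count]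
        intro z
        by_cases hz : z ∈ m.roots
        · have h1 : m.roots.count z ≤ K := le_trans (Multiset.count_le_card z _) (card_roots' m)
          have hzE : z ∈ E.roots := (mem_roots hE).mpr (hroot z hz)
          have h2 : 1 ≤ E.roots.count z := Multiset.one_le_count_iff_mem.mpr hzE
          have h3 : (E ^ K).roots.count z = K * E.roots.count z := by
            rw [roots_pow, Multiset.count_nsmul]
          calc m.roots.count z ≤ K := h1
            _ = K * 1 := (mul_one K).symm
            _ ≤ K * E.roots.count z := Nat.mul_le_mul_left K h2
            _ = (E ^ K).roots.count z := h3.symm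
        · simp [Multiset.count_eq_zero_of_notMem hz]
      calc m = (m.roots.map fun a => X - C a).prod := hfact
        _ ∣ ((E ^ K).roots.map fun a => X - C a).prod :=
            Multiset.prod_dvd_prod_of_le (Multiset.map_le_map hle)
        _ ∣ E ^ K := prod_multiset_X_sub_C_dvd _
    -- move to AdjoinRoot m
    set x : AdjoinRoot m := AdjoinRoot.mk m X with hx_def
    set e : AdjoinRoot m := AdjoinRoot.mk m E with he_def
    have henil : IsNilpotent e := by
      refine ⟨K, ?_⟩
      obtain ⟨h₂, hh₂⟩ := hdvd
      rw [he_def, ← map_pow, hh₂, map_mul, AdjoinRoot.mk_self, zero_mul]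
    -- x is a unit
    have hCmk : ∀ c : ℂ, AdjoinRoot.mk m (C c) = algebraMap ℂ (AdjoinRoot m) c := fun c => by
      rw [AdjoinRoot.algebraMap_eq]
      rfl
    have hxmul : x * (AdjoinRoot.mk m m.divX * algebraMap ℂ (AdjoinRoot m) (-(m.coeff 0)⁻¹)) = 1 := by
      have h0 : x * AdjoinRoot.mk m m.divX + algebraMap ℂ (AdjoinRoot m) (m.coeff 0) = 0 := by
        have h := congrArg (AdjoinRoot.mk m) (X_mul_divX_add m)
        rw [AdjoinRoot.mk_self, map_add, map_mul, hCmk, ← hx_def] at h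
        exact h
      have h1 : x * AdjoinRoot.mk m m.divX = algebraMap ℂ (AdjoinRoot m) (-(m.coeff 0)) := by
        rw [map_neg]
        linear_combination h0
      have h2 : (-(m.coeff 0)) * (-(m.coeff 0)⁻¹) = 1 := by
        field_simp
      rw [← mul_assoc, h1, ← map_mul, h2, map_one]
    have hxu : IsUnit x := IsUnit.of_mul_eq_one _ hxmul
    -- 2 is a unit in R
    have h2u : IsUnit (2 : AdjoinRoot m) := by
      refine IsUnit.of_mul_eq_one (algebraMap ℂ (AdjoinRoot m) 2⁻¹) ?_
      rw [← map_ofNat (algebraMap ℂ (AdjoinRoot m)) 2, ← map_mul]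
      norm_num
    -- nilpotent part
    set ν : AdjoinRoot m := ↑hxu.unit⁻¹ * e with hν_def
    have hνnil : IsNilpotent ν := (Commute.all _ _).isNilpotent_mul_left henil
    obtain ⟨s, hsu, hss⟩ := sqrt_one_add_nilpotent h2u hνnil
    set si : AdjoinRoot m := ↑hsu.unit⁻¹ with hsi_def
    have hsi : s * si = 1 := hsu.mul_val_inv
    have hxi : x * ↑hxu.unit⁻¹ = 1 := hxu.mul_val_inv
    have hsq : AdjoinRoot.mk m p₀ * AdjoinRoot.mk m p₀ = x + e := by
      rw [hx_def, he_def, ← map_mul, ← map_add]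
      congr 1
      ring
    have hxss : x * (s * s) = x + e := by
      rw [hss, mul_add, mul_one, hν_def, ← mul_assoc, hxi, one_mul]
    set t : AdjoinRoot m := AdjoinRoot.mk m p₀ * si with ht_def
    have htt : t * t = x := by
      have h1 : t * t = (AdjoinRoot.mk m p₀ * AdjoinRoot.mk m p₀) * (si * si) := by ring
      rw [h1, hsq, ← hxss]
      calc x * (s * s) * (si * si) = x * ((s * si) * (s * si)) := by ring
        _ = x := by rw [hsi, one_mul, mul_one]
    obtain ⟨P, hP⟩ := AdjoinRoot.mk_surjective t
    refine ⟨P, ?_⟩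
    have hmk0 : AdjoinRoot.mk m (P * P - X) = 0 := by
      rw [map_sub, map_mul, hP, ← hx_def, htt, sub_self]
    have hmdvd : m ∣ P * P - X := (AdjoinRoot.mk_eq_zero).mp hmk0
    obtain ⟨q, hq⟩ := hmdvd
    have hae := congrArg (aeval S) hq
    rw [map_sub, map_mul, map_mul, aeval_X, hmaev, zero_mul] at hae
    exact sub_eq_zero.mp hae


/-- If `V` is a finite-dimensional semisimple complex representation of `G` and `B`, `B'`
are two nondegenerate alternating `(G, μ)`-equivariant bilinear forms on `V`, then there
is `T ∈ GL(V)` commuting with the `G`-action with `B'(v,w) = B(Tv, Tw)`. -/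
theorem equivariant_symplectic_forms_conjugate
    {G V : Type*} [Group G] [AddCommGroup V] [Module ℂ V] [FiniteDimensional ℂ V]
    (ρ : Representation ℂ G V)
    (hss : ∀ W : Submodule ℂ V, (∀ g : G, ∀ v ∈ W, ρ g v ∈ W) →
      ∃ U : Submodule ℂ V, (∀ g : G, ∀ v ∈ U, ρ g v ∈ U) ∧ IsCompl W U)
    (μ : G →* ℂˣ)
    (B B' : LinearMap.BilinForm ℂ V)
    (hBalt : ∀ v, B v v = 0) (hB'alt : ∀ v, B' v v = 0)
    (hBnd : B.Nondegenerate) (hB'nd : B'.Nondegenerate)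
    (hBeq : ∀ g v w, B (ρ g v) (ρ g w) = (μ g : ℂ) * B v w)
    (hB'eq : ∀ g v w, B' (ρ g v) (ρ g w) = (μ g : ℂ) * B' v w) :
    ∃ T : V ≃ₗ[ℂ] V, (∀ g v, T (ρ g v) = ρ g (T v)) ∧
      ∀ v w, B' v w = B (T v) (T w) := by
  classical
  -- skew-symmetry from alternating
  have hBskew : ∀ v w, B v w = - B w v := by
    intro v w
    have h := hBalt (v + w)
    simp only [map_add, LinearMap.add_apply, hBalt] at h
    linear_combination h
  have hB'skew : ∀ v w, B' v w = - B' w v := by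
    intro v w
    have h := hB'alt (v + w)
    simp only [map_add, LinearMap.add_apply, hB'alt] at h
    linear_combination h
  -- the intertwiner S with B (S v) w = B' v w
  set Se : V ≃ₗ[ℂ] V := (B'.toDual hB'nd).trans (B.toDual hBnd).symm with hSe
  set S : Module.End ℂ V := Se.toLinearMap with hS_def
  have hSB : ∀ v w, B (S v) w = B' v w := by
    intro v w
    have h1 : (B.toDual hBnd) (Se v) = B'.toDual hB'nd v :=
      (B.toDual hBnd).apply_symm_apply _
    have h2 : B (S v) w = (B.toDual hBnd) (Se v) w :=
      (LinearMap.BilinForm.toDual_def hBnd).symm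
    rw [h2, h1, LinearMap.BilinForm.toDual_def hB'nd]
  -- S is a unit
  have hSu : IsUnit S := by
    rw [Module.End.isUnit_iff]
    exact Se.bijective
  -- each ρ g is surjective
  have hρsurj : ∀ g : G, Function.Surjective (ρ g) := by
    intro g w
    refine ⟨ρ g⁻¹ w, ?_⟩
    have h : ρ g * ρ g⁻¹ = 1 := by rw [← map_mul, mul_inv_cancel, map_one]
    calc ρ g (ρ g⁻¹ w) = (ρ g * ρ g⁻¹) w := rfl
      _ = w := by rw [h]; rfl
  -- S commutes with the action
  have hScomm : ∀ g : G, ρ g * S = S * ρ g := by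
    intro g
    apply LinearMap.ext
    intro v
    have key : ∀ w, B (ρ g (S v) - S (ρ g v)) w = 0 := by
      intro w
      obtain ⟨w', rfl⟩ := hρsurj g w
      have h1 : B (ρ g (S v)) (ρ g w') = (μ g : ℂ) * B (S v) w' := hBeq g (S v) w'
      have h2 : B (S (ρ g v)) (ρ g w') = B' (ρ g v) (ρ g w') := hSB _ _
      rw [map_sub, LinearMap.sub_apply, h1, h2, hB'eq, hSB, sub_eq_zero]
    have h0 : ρ g (S v) - S (ρ g v) = 0 := hBnd.1 _ key
    have := sub_eq_zero.mp h0
    simpa using this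
  -- S is B-self-adjoint
  have hSadj : ∀ v w, B (S v) w = B v (S w) := by
    intro v w
    rw [hSB, hB'skew, ← hSB, hBskew (S w) v]
    ring
  -- square root of S as a polynomial
  obtain ⟨P, hP⟩ := exists_aeval_sq S hSu
  set T₀ : Module.End ℂ V := aeval S P with hT₀
  -- properties transfer to polynomials in S
  have hpowadj : ∀ (n : ℕ) v w, B ((S ^ n) v) w = B v ((S ^ n) w) := by
    intro n
    induction n with
    | zero => intro v w; simp
    | succ n ih =>
      intro v w
      have h1 : (S ^ (n + 1)) v = (S ^ n) (S v) := by
        rw [pow_succ]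
        rfl
      have h2 : (S ^ (n + 1)) w = S ((S ^ n) w) := by
        rw [pow_succ']
        rfl
      rw [h1, h2, ih (S v) w, hSadj v ((S ^ n) w)]
  have hadj : ∀ (p : Polynomial ℂ) v w, B ((aeval S p) v) w = B v ((aeval S p) w) := by
    intro p
    induction p using Polynomial.induction_on' with
    | add p q hp hq =>
      intro v w
      simp only [map_add, LinearMap.add_apply]
      rw [hp v w, hq v w]
    | monomial n a =>
      intro v w
      rw [aeval_monomial]
      have h1 : (algebraMap ℂ (Module.End ℂ V) a * S ^ n) v = a • ((S ^ n) v) := rfl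
      have h2 : (algebraMap ℂ (Module.End ℂ V) a * S ^ n) w = a • ((S ^ n) w) := rfl
      rw [h1, h2, map_smul, LinearMap.smul_apply, map_smul, hpowadj n v w]
  have hcomm : ∀ (p : Polynomial ℂ) (g : G), ρ g * aeval S p = aeval S p * ρ g := by
    intro p
    induction p using Polynomial.induction_on' with
    | add p q hp hq =>
      intro g
      rw [map_add, mul_add, add_mul, hp g, hq g]
    | monomial n a =>
      intro g
      rw [aeval_monomial]
      have hSn : ρ g * S ^ n = S ^ n * ρ g := by
        induction n with
        | zero => simp
        | succ n ih =>
          rw [pow_succ, ← mul_assoc, ih, mul_assoc, hScomm g, ← mul_assoc]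
      calc ρ g * (algebraMap ℂ (Module.End ℂ V) a * S ^ n)
          = algebraMap ℂ (Module.End ℂ V) a * (ρ g * S ^ n) := by
            rw [← mul_assoc, ← mul_assoc, Algebra.commutes]
        _ = algebraMap ℂ (Module.End ℂ V) a * S ^ n * ρ g := by rw [hSn, mul_assoc]
  -- T₀ is bijective
  have hT₀inj : Function.Injective T₀ := by
    intro a b hab
    have h : T₀ (T₀ a) = T₀ (T₀ b) := by rw [hab]
    have hS' : S a = S b := by
      calc S a = (T₀ * T₀) a := by rw [hP]
        _ = T₀ (T₀ a) := rfl
        _ = T₀ (T₀ b) := h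
        _ = (T₀ * T₀) b := rfl
        _ = S b := by rw [hP]
    exact Se.injective hS'
  have hT₀surj : Function.Surjective T₀ :=
    (LinearMap.injective_iff_surjective).mp hT₀inj
  refine ⟨LinearEquiv.ofBijective T₀ (show Function.Bijective T₀ from ⟨hT₀inj, hT₀surj⟩), ?_, ?_⟩
  · intro g v
    have h := congrArg (fun f : Module.End ℂ V => f v) (hcomm P g)
    simpa using h.symm
  · intro v w
    have h1 : B' v w = B (S v) w := (hSB v w).symm
    have h2 : B (S v) w = B v (S w) := hSadj v w
    have h3 : S w = T₀ (T₀ w) := by rw [← hP]; rfl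
    have h4 : B v (T₀ (T₀ w)) = B (T₀ v) (T₀ w) := (hadj P v (T₀ w)).symm
    simp only [LinearEquiv.ofBijective_apply]
    rw [h1, h2, h3, h4]
end

section
/- Let G be a group, M a finite-dimensional complex vector space, and V an irreducible finite-dimensional complex G-representation carrying a nondegenerate (G,μ)-equivariant bilinear form b of sign ε ∈ {+1,−1} (i.e. b(w,v) = ε·b(v,w)). Then the map sending a bilinear form β on M to the form (m⊗v, m'⊗v') ↦ β(m,m')·b(v,v') on M ⊗ V is a bijection between nondegenerate bilinear forms on M of sign −ε and nondegenerate (G,μ)-equivariant alternating forms on M ⊗ V, where G acts on M ⊗ V through V. -/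
open TensorProduct

/-- Schur-type lemma: any `(G,μ)`-equivariant bilinear form on an irreducible
representation with a nondegenerate equivariant form `b` is a multiple of `b`. -/
theorem aux_proportional {G V : Type*} [Group G]
    [AddCommGroup V] [Module ℂ V] [FiniteDimensional ℂ V]
    (ρ : Representation ℂ G V)
    (hirr : (∃ v : V, v ≠ 0) ∧
      ∀ W : Submodule ℂ V, (∀ g : G, ∀ v ∈ W, ρ g v ∈ W) → W = ⊥ ∨ W = ⊤)
    (μ : G →* ℂˣ)
    (b : LinearMap.BilinForm ℂ V) (hbnd : b.Nondegenerate)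
    (hbeq : ∀ g v w, b (ρ g v) (ρ g w) = (μ g : ℂ) * b v w)
    (c : LinearMap.BilinForm ℂ V)
    (hceq : ∀ g v w, c (ρ g v) (ρ g w) = (μ g : ℂ) * c v w) :
    ∃ lam : ℂ, ∀ v w, c v w = lam * b v w := by
  obtain ⟨v1, hv1⟩ := hirr.1
  haveI : Nontrivial V := ⟨v1, 0, hv1⟩
  set T : V →ₗ[ℂ] V := (b.toDual hbnd).symm.toLinearMap ∘ₗ c with hT
  have hTb : ∀ v w, b (T v) w = c v w := by
    intro v w
    simpa [hT] using LinearMap.BilinForm.apply_toDual_symm_apply (hB := hbnd) (c v) w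
  have hrho_inv : ∀ (g : G) (w : V), ρ g (ρ g⁻¹ w) = w := by
    intro g w
    rw [← Module.End.mul_apply, ← map_mul, mul_inv_cancel, map_one, Module.End.one_apply]
  have hcomm : ∀ (g : G) (v : V), T (ρ g v) = ρ g (T v) := by
    intro g v
    have h0 : ∀ w, b (T (ρ g v) - ρ g (T v)) w = 0 := by
      intro w
      have h1 : b (T (ρ g v)) w = b (ρ g (T v)) w := by
        have hw : ρ g (ρ g⁻¹ w) = w := hrho_inv g w
        calc b (T (ρ g v)) w = c (ρ g v) w := hTb _ _
          _ = c (ρ g v) (ρ g (ρ g⁻¹ w)) := by rw [hw]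
          _ = (μ g : ℂ) * c v (ρ g⁻¹ w) := hceq _ _ _
          _ = (μ g : ℂ) * b (T v) (ρ g⁻¹ w) := by rw [hTb]
          _ = b (ρ g (T v)) (ρ g (ρ g⁻¹ w)) := (hbeq _ _ _).symm
          _ = b (ρ g (T v)) w := by rw [hw]
      simp [map_sub, LinearMap.sub_apply, h1]
    exact sub_eq_zero.mp (hbnd.1 _ h0)
  obtain ⟨lam, hlam⟩ := Module.End.exists_eigenvalue T
  have hinv : ∀ g : G, ∀ v ∈ Module.End.eigenspace T lam, ρ g v ∈
      Module.End.eigenspace T lam := by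
    intro g v hv
    rw [Module.End.mem_eigenspace_iff] at hv ⊢
    rw [hcomm g v, hv, map_smul]
  have hW : Module.End.eigenspace T lam = ⊤ := by
    rcases hirr.2 (Module.End.eigenspace T lam) hinv with h | h
    · exact absurd h (Module.End.hasEigenvalue_iff.mp hlam)
    · exact h
  refine ⟨lam, fun v w => ?_⟩
  have hv : T v = lam • v := by
    have : v ∈ Module.End.eigenspace T lam := hW ▸ Submodule.mem_top
    exact Module.End.mem_eigenspace_iff.mp this
  rw [← hTb, hv, map_smul, LinearMap.smul_apply, smul_eq_mul]

/-- The tensor product of nondegenerate bilinear forms is left-separating. -/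
theorem aux_tmul_sepLeft {M V : Type*}
    [AddCommGroup M] [Module ℂ M] [FiniteDimensional ℂ M]
    [AddCommGroup V] [Module ℂ V] [FiniteDimensional ℂ V]
    (β : LinearMap.BilinForm ℂ M) (b : LinearMap.BilinForm ℂ V)
    (hβ : β.Nondegenerate) (hb : b.Nondegenerate) :
    ∀ x : M ⊗[ℂ] V, (∀ y : M ⊗[ℂ] V, (β.tmul b) x y = 0) → x = 0 := by
  set E : M ⊗[ℂ] V ≃ₗ[ℂ] Module.Dual ℂ (M ⊗[ℂ] V) :=
    (TensorProduct.congr (β.toDual hβ) (b.toDual hb)).trans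
      (TensorProduct.dualDistribEquiv ℂ M V) with hE
  have hEeq : E.toLinearMap = (β.tmul b : M ⊗[ℂ] V →ₗ[ℂ] Module.Dual ℂ (M ⊗[ℂ] V)) := by
    apply TensorProduct.ext'
    intro m v
    apply TensorProduct.ext'
    intro m' v'
    show (TensorProduct.dualDistribEquiv ℂ M V)
        (TensorProduct.congr (β.toDual hβ) (b.toDual hb) (m ⊗ₜ v)) (m' ⊗ₜ v')
      = (β.tmul b) (m ⊗ₜ v) (m' ⊗ₜ v')
    rw [TensorProduct.congr_tmul]
    show TensorProduct.dualDistrib ℂ M V ((β.toDual hβ) m ⊗ₜ (b.toDual hb) v) (m' ⊗ₜ v')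
      = (β.tmul b) (m ⊗ₜ v) (m' ⊗ₜ v')
    rw [TensorProduct.dualDistrib_apply, LinearMap.BilinForm.tensorDistrib_tmul]
    show β m m' * b v v' = b v v' • β m m'
    rw [smul_eq_mul, mul_comm]
  intro x hx
  have h0 : E x = 0 := by
    have h1 : E.toLinearMap x = (β.tmul b) x := by rw [hEeq]
    rw [LinearEquiv.coe_coe] at h1
    rw [h1]
    exact LinearMap.ext hx
  exact (LinearEquiv.map_eq_zero_iff E).mp h0

/-- Let `V` be an irreducible `G`-representation with a nondegenerate `(G,μ)`-equivariant
bilinear form `b` of sign `ε`, and `M` a finite-dimensional multiplicity space. Then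
`β ↦ β ⊗ b` is a bijection between nondegenerate bilinear forms on `M` of sign `-ε` and
nondegenerate `(G,μ)`-equivariant alternating forms on `M ⊗ V` (where `G` acts through `V`). -/
theorem isotypic_summand_symplectic_forms
    {G M V : Type*} [Group G]
    [AddCommGroup M] [Module ℂ M] [FiniteDimensional ℂ M]
    [AddCommGroup V] [Module ℂ V] [FiniteDimensional ℂ V]
    (ρ : Representation ℂ G V)
    (hirr : (∃ v : V, v ≠ 0) ∧
      ∀ W : Submodule ℂ V, (∀ g : G, ∀ v ∈ W, ρ g v ∈ W) → W = ⊥ ∨ W = ⊤)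
    (μ : G →* ℂˣ)
    (b : LinearMap.BilinForm ℂ V) (ε : ℂ) (hε : ε = 1 ∨ ε = -1)
    (hsign : ∀ v w, b w v = ε * b v w)
    (hbnd : b.Nondegenerate)
    (hbeq : ∀ g v w, b (ρ g v) (ρ g w) = (μ g : ℂ) * b v w) :
    (∀ β : LinearMap.BilinForm ℂ M, β.Nondegenerate → (∀ m m', β m' m = -ε * β m m') →
      ((β.tmul b).Nondegenerate ∧ (∀ x, (β.tmul b) x x = 0) ∧
        ∀ g x y, (β.tmul b) (LinearMap.lTensor M (ρ g) x) (LinearMap.lTensor M (ρ g) y)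
          = (μ g : ℂ) * (β.tmul b) x y)) ∧
    (∀ B : LinearMap.BilinForm ℂ (M ⊗[ℂ] V), B.Nondegenerate → (∀ x, B x x = 0) →
      (∀ g x y, B (LinearMap.lTensor M (ρ g) x) (LinearMap.lTensor M (ρ g) y)
          = (μ g : ℂ) * B x y) →
      ∃! β : LinearMap.BilinForm ℂ M,
        β.Nondegenerate ∧ (∀ m m', β m' m = -ε * β m m') ∧ β.tmul b = B) := by
  have hε2 : ε * ε = 1 := by rcases hε with h | h <;> rw [h] <;> norm_num
  constructor
  · -- forward direction
    intro β hβnd hβs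
    have hsepL := aux_tmul_sepLeft β b hβnd hbnd
    have hflipeq : LinearMap.BilinForm.tmul (LinearMap.flip β) (LinearMap.flip b) = (β.tmul b).flip := by
      apply TensorProduct.ext'
      intro m v
      apply TensorProduct.ext'
      intro m' w
      show (LinearMap.BilinForm.tmul (LinearMap.flip β) (LinearMap.flip b)) (m ⊗ₜ v) (m' ⊗ₜ w)
        = (β.tmul b) (m' ⊗ₜ w) (m ⊗ₜ v)
      rw [LinearMap.BilinForm.tensorDistrib_tmul, LinearMap.BilinForm.tensorDistrib_tmul]
      rfl
    have hsepR : ∀ y : M ⊗[ℂ] V, (∀ x : M ⊗[ℂ] V, (β.tmul b) x y = 0) → y = 0 := by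
      intro y hy
      apply aux_tmul_sepLeft (LinearMap.flip β) (LinearMap.flip b) hβnd.flip hbnd.flip y
      intro z
      have := DFunLike.congr_fun (DFunLike.congr_fun hflipeq y) z
      rw [this, LinearMap.flip_apply]
      exact hy z
    refine ⟨⟨hsepL, hsepR⟩, ?_, ?_⟩
    · -- alternating
      have hflip : (β.tmul b).flip = -(β.tmul b) := by
        apply TensorProduct.ext'
        intro m v
        apply TensorProduct.ext'
        intro m' v'
        show (β.tmul b) (m' ⊗ₜ v') (m ⊗ₜ v) = -((β.tmul b) (m ⊗ₜ v) (m' ⊗ₜ v'))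
        rw [LinearMap.BilinForm.tensorDistrib_tmul, LinearMap.BilinForm.tensorDistrib_tmul,
          smul_eq_mul, smul_eq_mul, hsign v v', hβs m m']
        linear_combination (-(b v v' * β m m')) * hε2
      intro x
      have h := DFunLike.congr_fun (DFunLike.congr_fun hflip x) x
      simp only [LinearMap.flip_apply, LinearMap.neg_apply] at h
      linear_combination h / 2
    · -- equivariance
      intro g x y
      have heq : (β.tmul b).compl₁₂ (LinearMap.lTensor M (ρ g)) (LinearMap.lTensor M (ρ g))
          = (μ g : ℂ) • (β.tmul b) := by
        apply TensorProduct.ext'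
        intro m v
        apply TensorProduct.ext'
        intro m' v'
        show (β.tmul b) (LinearMap.lTensor M (ρ g) (m ⊗ₜ v))
            (LinearMap.lTensor M (ρ g) (m' ⊗ₜ v'))
          = ((μ g : ℂ) • (β.tmul b)) (m ⊗ₜ v) (m' ⊗ₜ v')
        rw [LinearMap.lTensor_tmul, LinearMap.lTensor_tmul,
          LinearMap.BilinForm.tensorDistrib_tmul, LinearMap.smul_apply, LinearMap.smul_apply,
          LinearMap.BilinForm.tensorDistrib_tmul, smul_eq_mul, smul_eq_mul, smul_eq_mul,
          hbeq g v v']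
        ring
      have h := DFunLike.congr_fun (DFunLike.congr_fun heq x) y
      simpa [LinearMap.compl₁₂_apply, LinearMap.smul_apply, smul_eq_mul] using h
  · -- backward direction
    intro B hBnd halt heqB
    -- skew-symmetry of B
    have hskew : ∀ x y, B y x = -(B x y) := by
      intro x y
      have h := halt (x + y)
      simp only [map_add, LinearMap.add_apply, halt] at h
      linear_combination h
    -- pick v₀, w₀ with b v₀ w₀ ≠ 0
    obtain ⟨v0, hv0⟩ := hirr.1
    have hex : ∃ w, b v0 w ≠ 0 := by
      by_contra h
      push_neg at h
      exact hv0 (hbnd.1 v0 h)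
    obtain ⟨w0, hb0⟩ := hex
    -- define β
    set β : LinearMap.BilinForm ℂ M :=
      (b v0 w0)⁻¹ • B.compl₁₂ ((TensorProduct.mk ℂ M V).flip v0)
        ((TensorProduct.mk ℂ M V).flip w0) with hβdef
    have hβapp : ∀ m m', β m m' = (b v0 w0)⁻¹ * B (m ⊗ₜ v0) (m' ⊗ₜ w0) := by
      intro m m'
      simp [hβdef, LinearMap.compl₁₂_apply, smul_eq_mul]
    -- key identity
    have key : ∀ m m' v w, B (m ⊗ₜ[ℂ] v) (m' ⊗ₜ[ℂ] w) = β m m' * b v w := by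
      intro m m' v w
      set c : LinearMap.BilinForm ℂ V :=
        B.compl₁₂ ((TensorProduct.mk ℂ M V) m) ((TensorProduct.mk ℂ M V) m') with hcdef
      have hcapp : ∀ v w, c v w = B (m ⊗ₜ v) (m' ⊗ₜ w) := by
        intro v w; simp [hcdef, LinearMap.compl₁₂_apply]
      have hceq : ∀ g v w, c (ρ g v) (ρ g w) = (μ g : ℂ) * c v w := by
        intro g v w
        rw [hcapp, hcapp]
        have h := heqB g (m ⊗ₜ v) (m' ⊗ₜ w)
        rwa [LinearMap.lTensor_tmul, LinearMap.lTensor_tmul] at h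
      obtain ⟨lam, hlam⟩ := aux_proportional ρ hirr μ b hbnd hbeq c hceq
      have hβlam : β m m' = lam := by
        rw [hβapp, ← hcapp, hlam v0 w0]
        field_simp
      rw [← hcapp, hlam v w, hβlam]
    -- tmul identity
    have htmul : β.tmul b = B := by
      apply TensorProduct.ext'
      intro m v
      apply TensorProduct.ext'
      intro m' w
      show (β.tmul b) (m ⊗ₜ v) (m' ⊗ₜ w) = B (m ⊗ₜ v) (m' ⊗ₜ w)
      rw [LinearMap.BilinForm.tensorDistrib_tmul, key, smul_eq_mul, mul_comm]
    -- β is nondegenerate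
    have hβnd : β.Nondegenerate := by
      refine ⟨?_, fun m hm => ?_⟩
      swap
      · have hB0 : ∀ y, B y (m ⊗ₜ[ℂ] w0) = 0 := by
          intro y
          induction y using TensorProduct.induction_on with
          | zero => simp
          | tmul m' w => rw [key, hm m', zero_mul]
          | add x y hx hy => rw [map_add, LinearMap.add_apply, hx, hy, add_zero]
        have h0 : m ⊗ₜ[ℂ] w0 = 0 := hBnd.2 _ hB0
        have h1 := congrArg (fun z => (TensorProduct.rid ℂ M)
          (LinearMap.lTensor M (b v0) z)) h0
        simp only [LinearMap.lTensor_tmul, map_zero, TensorProduct.rid_tmul] at h1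
        rcases smul_eq_zero.mp h1 with h | h
        · exact absurd h hb0
        · exact h
      intro m hm
      have hB0 : B (m ⊗ₜ[ℂ] v0) = (0 : M ⊗[ℂ] V →ₗ[ℂ] ℂ) := by
        apply TensorProduct.ext'
        intro m' w
        show B (m ⊗ₜ v0) (m' ⊗ₜ w) = 0
        rw [key, hm m', zero_mul]
      have h0 : m ⊗ₜ[ℂ] v0 = 0 := by
        apply hBnd.1
        intro y
        rw [hB0]
        rfl
      -- deduce m = 0 using the functional b · w0
      have h1 := congrArg (fun z => (TensorProduct.rid ℂ M)
        (LinearMap.lTensor M ((LinearMap.flip b) w0) z)) h0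
      simp only [LinearMap.lTensor_tmul, map_zero, TensorProduct.rid_tmul,
        LinearMap.flip_apply] at h1
      rcases smul_eq_zero.mp h1 with h | h
      · exact absurd h hb0
      · exact h
    -- β has the right sign
    have hβsign : ∀ m m', β m' m = -ε * β m m' := by
      intro m m'
      apply mul_right_cancel₀ hb0
      have e1 := key m' m v0 w0
      have e2 := key m m' w0 v0
      have e3 := hskew (m ⊗ₜ[ℂ] w0) (m' ⊗ₜ[ℂ] v0)
      have e4 := hsign v0 w0
      linear_combination -e1 + e3 - e2 - β m m' * e4
    refine ⟨β, ⟨hβnd, hβsign, htmul⟩, ?_⟩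
    intro β' ⟨_, _, htmul'⟩
    apply LinearMap.ext
    intro m
    apply LinearMap.ext
    intro m'
    apply mul_right_cancel₀ hb0
    have h1 : (β'.tmul b) (m ⊗ₜ[ℂ] v0) (m' ⊗ₜ[ℂ] w0) = β' m m' * b v0 w0 := by
      rw [LinearMap.BilinForm.tensorDistrib_tmul, smul_eq_mul, mul_comm]
    have h2 := key m m' v0 w0
    rw [htmul'] at h1
    rw [← h1, h2]
end

section
/- Let V be a 4-dimensional complex vector space with a nondegenerate alternating bilinear form ⟨,⟩, G a group, μ: G → ℂ× a character, and φ: G → GL(V) a semisimple representation with ⟨φ(g)v, φ(g)w⟩ = μ(g)⟨v,w⟩ for all g. If φ has no nonzero G-invariant isotropic subspace, then either φ is irreducible, or V = V₁ ⊕ V₂ where V₁, V₂ are non-isomorphic irreducible 2-dimensional G-subrepresentations, each nondegenerate for ⟨,⟩, and the form restricted to each Vᵢ satisfies ⟨φ(g)v, φ(g)w⟩ = μ(g)⟨v,w⟩ with ∧²Vᵢ affording the character μ. -/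
open Module

private lemma alt_expand' {M : Type*} [AddCommGroup M] [Module ℂ M]
    (b : Basis (Fin 2) ℂ M) (C : LinearMap.BilinForm ℂ M)
    (halt : ∀ v, C v v = 0) (v w : M) :
    C v w = (b.repr v 0 * b.repr w 1 - b.repr v 1 * b.repr w 0) * C (b 0) (b 1) := by
  have hskew : ∀ x y, C y x = - C x y := by
    intro x y
    have h := halt (x + y)
    simp only [map_add, LinearMap.add_apply, halt] at h
    linear_combination h
  have hv : v = b.repr v 0 • b 0 + b.repr v 1 • b 1 := by
    have := b.sum_repr v; rw [Fin.sum_univ_two] at this; exact this.symm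
  have hw : w = b.repr w 0 • b 0 + b.repr w 1 • b 1 := by
    have := b.sum_repr w; rw [Fin.sum_univ_two] at this; exact this.symm
  conv_lhs => rw [hv, hw]
  simp only [map_add, map_smul, LinearMap.add_apply, LinearMap.smul_apply, smul_eq_mul,
    halt, hskew (b 0) (b 1)]
  ring

private lemma det_of_conformal' {M : Type*} [AddCommGroup M] [Module ℂ M] [Module.Finite ℂ M]
    [Module.Free ℂ M]
    (b : Basis (Fin 2) ℂ M) (C : LinearMap.BilinForm ℂ M)
    (halt : ∀ v, C v v = 0) (hxy : C (b 0) (b 1) ≠ 0)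
    (T : M →ₗ[ℂ] M) (c : ℂ) (hT : ∀ v w, C (T v) (T w) = c * C v w) :
    LinearMap.det T = c := by
  have e1 := alt_expand' b C halt (T (b 0)) (T (b 1))
  rw [hT] at e1
  have hc : c = b.repr (T (b 0)) 0 * b.repr (T (b 1)) 1
      - b.repr (T (b 0)) 1 * b.repr (T (b 1)) 0 := mul_right_cancel₀ hxy e1
  have hdet : LinearMap.det T = b.repr (T (b 0)) 0 * b.repr (T (b 1)) 1
      - b.repr (T (b 1)) 0 * b.repr (T (b 0)) 1 := by
    rw [← LinearMap.det_toMatrix b T, Matrix.det_fin_two]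
    simp [LinearMap.toMatrix_apply]
  rw [hdet, hc]; ring

/-- Structure of discrete series L-parameters for GSp₄: a semisimple representation on a
4-dimensional symplectic space preserving the form up to `μ`, with no nonzero invariant
isotropic subspace, is either irreducible or the direct sum of two non-isomorphic
irreducible 2-dimensional nondegenerate subrepresentations each with determinant `μ`. -/
theorem discrete_series_parameter_structure
    {G V : Type*} [Group G] [AddCommGroup V] [Module ℂ V] [FiniteDimensional ℂ V]
    (B : LinearMap.BilinForm ℂ V)
    (hBalt : ∀ v, B v v = 0) (hBnd : B.Nondegenerate)
    (hdim : Module.finrank ℂ V = 4)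
    (φ : Representation ℂ G V) (μ : G →* ℂˣ)
    (hss : ∀ W : Submodule ℂ V, (∀ g : G, ∀ v ∈ W, φ g v ∈ W) →
      ∃ U : Submodule ℂ V, (∀ g : G, ∀ v ∈ U, φ g v ∈ U) ∧ IsCompl W U)
    (heq : ∀ g v w, B (φ g v) (φ g w) = (μ g : ℂ) * B v w)
    (hnoiso : ∀ W : Submodule ℂ V, (∀ g : G, ∀ v ∈ W, φ g v ∈ W) →
      (∀ v ∈ W, ∀ w ∈ W, B v w = 0) → W = ⊥) :
    (∀ W : Submodule ℂ V, (∀ g : G, ∀ v ∈ W, φ g v ∈ W) → W = ⊥ ∨ W = ⊤) ∨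
    ∃ (W₁ W₂ : Submodule ℂ V) (h₁ : ∀ g : G, ∀ v ∈ W₁, φ g v ∈ W₁)
      (h₂ : ∀ g : G, ∀ v ∈ W₂, φ g v ∈ W₂),
      IsCompl W₁ W₂ ∧
      Module.finrank ℂ W₁ = 2 ∧ Module.finrank ℂ W₂ = 2 ∧
      -- each Wᵢ is irreducible
      (∀ U : Submodule ℂ V, U ≤ W₁ → (∀ g : G, ∀ v ∈ U, φ g v ∈ U) → U = ⊥ ∨ U = W₁) ∧
      (∀ U : Submodule ℂ V, U ≤ W₂ → (∀ g : G, ∀ v ∈ U, φ g v ∈ U) → U = ⊥ ∨ U = W₂) ∧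
      -- the two subrepresentations are not isomorphic
      (¬ ∃ e : W₁ ≃ₗ[ℂ] W₂, ∀ (g : G) (v : W₁),
        (e ⟨φ g v, h₁ g v v.2⟩ : V) = φ g (e v)) ∧
      -- the form is nondegenerate on each Wᵢ
      (∀ v ∈ W₁, (∀ w ∈ W₁, B v w = 0) → v = 0) ∧
      (∀ v ∈ W₂, (∀ w ∈ W₂, B v w = 0) → v = 0) ∧
      -- restricted equivariance
      (∀ g : G, ∀ v ∈ W₁, ∀ w ∈ W₁, B (φ g v) (φ g w) = (μ g : ℂ) * B v w) ∧
      (∀ g : G, ∀ v ∈ W₂, ∀ w ∈ W₂, B (φ g v) (φ g w) = (μ g : ℂ) * B v w) ∧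
      -- ∧² Wᵢ affords the character μ, i.e. the determinant of each 2-dimensional
      -- subrepresentation equals μ
      (∀ g : G, LinearMap.det ((φ g).restrict (h₁ g)) = (μ g : ℂ)) ∧
      (∀ g : G, LinearMap.det ((φ g).restrict (h₂ g)) = (μ g : ℂ)) := by
  classical
  by_cases hirrcase : ∀ W : Submodule ℂ V, (∀ g : G, ∀ v ∈ W, φ g v ∈ W) → W = ⊥ ∨ W = ⊤
  · exact Or.inl hirrcase
  right
  push_neg at hirrcase
  obtain ⟨W, hWinv, hWbot, hWtop⟩ := hirrcase
  -- basic facts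
  have hskew : ∀ v w, B w v = -B v w := by
    intro v w
    have h := hBalt (v + w)
    simp only [map_add, LinearMap.add_apply, hBalt] at h
    linear_combination h
  have hrefl : B.IsRefl := by
    intro x y h
    rw [hskew x y, h, neg_zero]
  have hinv : ∀ (g : G) (v : V), φ g (φ g⁻¹ v) = v := by
    intro g v
    rw [← Module.End.mul_apply, ← map_mul, mul_inv_cancel, map_one, Module.End.one_apply]
  -- the orthogonal complement of an invariant subspace is invariant
  have horthinv : ∀ W' : Submodule ℂ V, (∀ g : G, ∀ v ∈ W', φ g v ∈ W') →
      ∀ g : G, ∀ v ∈ B.orthogonal W', φ g v ∈ B.orthogonal W' := by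
    intro W' hW' g v hv n hn
    show B n (φ g v) = 0
    have h2 := heq g (φ g⁻¹ n) v
    rw [hinv] at h2
    rw [h2, hv _ (hW' g⁻¹ n hn), mul_zero]
  have hdisj : ∀ W' : Submodule ℂ V, (∀ g : G, ∀ v ∈ W', φ g v ∈ W') →
      W' ⊓ B.orthogonal W' = ⊥ := by
    intro W' hW'
    refine hnoiso _ (fun g v hv => ⟨hW' g v hv.1, horthinv W' hW' g v hv.2⟩) ?_
    intro v hv w hw
    exact hw.2 v hv.1
  have hndres : ∀ W' : Submodule ℂ V, (∀ g : G, ∀ v ∈ W', φ g v ∈ W') →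
      (B.restrict W').Nondegenerate := by
    intro W' hW'
    refine ⟨fun v h => ?_, fun v h => ?_⟩
    · have hvmem : (v : V) ∈ W' ⊓ B.orthogonal W' :=
        ⟨v.2, fun n hn => hrefl (v : V) n (h ⟨n, hn⟩)⟩
      rw [hdisj W' hW'] at hvmem
      exact Subtype.ext hvmem
    · have hvmem : (v : V) ∈ W' ⊓ B.orthogonal W' :=
        ⟨v.2, fun n hn => h ⟨n, hn⟩⟩
      rw [hdisj W' hW'] at hvmem
      exact Subtype.ext hvmem
  have hndstate : ∀ W' : Submodule ℂ V, (∀ g : G, ∀ v ∈ W', φ g v ∈ W') →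
      ∀ v ∈ W', (∀ w ∈ W', B v w = 0) → v = 0 := by
    intro W' hW' v hv h
    have hvmem : v ∈ W' ⊓ B.orthogonal W' := ⟨hv, fun n hn => hrefl v n (h n hn)⟩
    rwa [hdisj W' hW', Submodule.mem_bot] at hvmem
  -- a one-dimensional invariant subspace cannot exist
  have hrank1 : ∀ W' : Submodule ℂ V, (∀ g : G, ∀ v ∈ W', φ g v ∈ W') →
      Module.finrank ℂ W' ≠ 1 := by
    intro W' hW' h1
    have hiso : ∀ v ∈ W', ∀ w ∈ W', B v w = 0 := by
      intro v hv w hw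
      rcases eq_or_ne v 0 with rfl | hv0
      · simp
      have hsp : Submodule.span ℂ {v} = W' := by
        refine Submodule.eq_of_le_of_finrank_eq ((Submodule.span_singleton_le_iff_mem v W').mpr hv) ?_
        rw [finrank_span_singleton hv0, h1]
      obtain ⟨c, rfl⟩ := Submodule.mem_span_singleton.mp (hsp ▸ hw)
      rw [map_smul, smul_eq_mul, hBalt, mul_zero]
    rw [hnoiso W' hW' hiso] at h1
    simp at h1
  -- W₂ is the orthogonal complement of W
  set W₂ : Submodule ℂ V := B.orthogonal W with hW₂def
  have hW₂inv : ∀ g : G, ∀ v ∈ W₂, φ g v ∈ W₂ := horthinv W hWinv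
  have hcompl : IsCompl W W₂ :=
    LinearMap.BilinForm.isCompl_orthogonal_of_restrict_nondegenerate hrefl (hndres W hWinv)
  have hsum : Module.finrank ℂ W + Module.finrank ℂ W₂ = 4 := by
    rw [← hdim]; exact Submodule.finrank_add_eq_of_isCompl hcompl
  have h0 : Module.finrank ℂ W ≠ 0 := fun h => hWbot (Submodule.finrank_eq_zero.mp h)
  have h20 : Module.finrank ℂ W₂ ≠ 0 := by
    intro h
    have : Module.finrank ℂ W = 4 := by omega
    exact hWtop (Submodule.eq_top_of_finrank_eq (by rw [this, hdim]))
  have hfr2 : Module.finrank ℂ W = 2 := by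
    have := hrank1 W hWinv
    have := hrank1 W₂ hW₂inv
    omega
  have hfr2' : Module.finrank ℂ W₂ = 2 := by omega
  -- irreducibility
  have hirr : ∀ W' : Submodule ℂ V, (∀ g : G, ∀ v ∈ W', φ g v ∈ W') →
      Module.finrank ℂ W' = 2 →
      ∀ U : Submodule ℂ V, U ≤ W' → (∀ g : G, ∀ v ∈ U, φ g v ∈ U) → U = ⊥ ∨ U = W' := by
    intro W' hW' h2 U hle hU
    have hle2 : Module.finrank ℂ U ≤ 2 := h2 ▸ Submodule.finrank_mono hle
    rcases eq_or_ne (Module.finrank ℂ U) 0 with h|h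
    · exact Or.inl (Submodule.finrank_eq_zero.mp h)
    rcases eq_or_ne (Module.finrank ℂ U) 1 with h1|h1
    · exact absurd h1 (hrank1 U hU)
    · exact Or.inr (Submodule.eq_of_le_of_finrank_eq hle (by omega))
  refine ⟨W, W₂, hWinv, hW₂inv, hcompl, hfr2, hfr2', hirr W hWinv hfr2, hirr W₂ hW₂inv hfr2',
    ?_, hndstate W hWinv, hndstate W₂ hW₂inv, fun g v _ w _ => heq g v w,
    fun g v _ w _ => heq g v w, ?_, ?_⟩
  · -- non-isomorphic
    rintro ⟨e, he⟩
    set b := Module.finBasisOfFinrankEq ℂ W hfr2 with hb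
    have halt1 : ∀ v : W, (B.restrict W) v v = 0 := fun v => hBalt v
    set C₂ : LinearMap.BilinForm ℂ W :=
      (B.restrict W₂).compl₁₂ e.toLinearMap e.toLinearMap with hC₂
    have hC₂app : ∀ v w : W, C₂ v w = B (e v) (e w) := by
      intro v w
      simp [hC₂, LinearMap.compl₁₂_apply, LinearMap.BilinForm.restrict_apply]
    have halt2 : ∀ v : W, C₂ v v = 0 := fun v => by rw [hC₂app]; exact hBalt _
    rcases eq_or_ne (C₂ (b 0) (b 1)) 0 with h0 | h0
    · -- then W₂ would be isotropic
      have hbot : W₂ = ⊥ := by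
        refine hnoiso W₂ hW₂inv ?_
        intro z hz z' hz'
        have h := hC₂app (e.symm ⟨z, hz⟩) (e.symm ⟨z', hz'⟩)
        rw [alt_expand' b C₂ halt2, h0, mul_zero] at h
        simpa using h.symm
      rw [hbot] at hfr2'
      simp at hfr2'
    · obtain ⟨c, hc⟩ := IsAlgClosed.exists_pow_nat_eq
        (-((B.restrict W) (b 0) (b 1)) / C₂ (b 0) (b 1)) (n := 2) (by norm_num)
      have hzero : ∀ u u' : W, B (u : V) (u' : V) + c ^ 2 * B ((e u : V)) ((e u' : V)) = 0 := by
        intro u u'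
        have e1 := alt_expand' b (B.restrict W) halt1 u u'
        have e2 := alt_expand' b C₂ halt2 u u'
        have key : (B.restrict W) u u' + c ^ 2 * C₂ u u' = 0 := by
          rw [e1, e2, hc]
          field_simp
          ring
        simpa [hC₂app, LinearMap.BilinForm.restrict_apply] using key
      set f : W →ₗ[ℂ] V := W.subtype + c • (W₂.subtype ∘ₗ (e : W →ₗ[ℂ] W₂)) with hf
      have hfapp : ∀ u : W, f u = (u : V) + c • ((e u : V)) := by
        intro u; simp [hf]
      have hZinv : ∀ g : G, ∀ v ∈ LinearMap.range f, φ g v ∈ LinearMap.range f := by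
        rintro g _ ⟨u, rfl⟩
        refine ⟨⟨φ g ↑u, hWinv g _ u.2⟩, ?_⟩
        rw [hfapp, hfapp, he g u]
        simp [map_add, map_smul]
      have hZiso : ∀ v ∈ LinearMap.range f, ∀ w ∈ LinearMap.range f, B v w = 0 := by
        rintro _ ⟨u, rfl⟩ _ ⟨u', rfl⟩
        rw [hfapp, hfapp]
        have c1 : B (u : V) ((e u' : V)) = 0 := (e u').2 (u : V) u.2
        have c2 : B ((e u : V)) (u' : V) = 0 := by
          rw [hskew, (e u).2 (u' : V) u'.2, neg_zero]
        have hz := hzero u u'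
        simp only [map_add, map_smul, LinearMap.add_apply, LinearMap.smul_apply, smul_eq_mul]
        linear_combination hz + c * c1 + c * c2
      have hZbot := hnoiso _ hZinv hZiso
      have hfb : f (b 0) = 0 := by
        have hm : f (b 0) ∈ LinearMap.range f := ⟨b 0, rfl⟩
        rwa [hZbot, Submodule.mem_bot] at hm
      rw [hfapp] at hfb
      have hmem2 : ((b 0 : W) : V) ∈ W₂ := by
        rw [eq_neg_of_add_eq_zero_left hfb]
        exact neg_mem (Submodule.smul_mem _ _ (e (b 0)).2)
      have hzero0 : ((b 0 : W) : V) = 0 := by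
        have hle := hcompl.disjoint.le_bot (Submodule.mem_inf.mpr ⟨(b 0).2, hmem2⟩)
        simpa using hle
      exact Basis.ne_zero b 0 (Subtype.ext hzero0)
  · -- det on W
    intro g
    set b := Module.finBasisOfFinrankEq ℂ W hfr2 with hb
    have halt1 : ∀ v : W, (B.restrict W) v v = 0 := fun v => hBalt v
    have hxy : (B.restrict W) (b 0) (b 1) ≠ 0 := by
      intro h0
      refine Basis.ne_zero b 0 ((hndres W hWinv).1 (b 0) ?_)
      intro w
      rw [alt_expand' b _ halt1 (b 0) w, h0, mul_zero]
    refine det_of_conformal' b _ halt1 hxy _ _ ?_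
    intro v w
    simp only [LinearMap.BilinForm.restrict_apply, LinearMap.restrict_coe_apply]
    exact heq g v w
  · -- det on W₂
    intro g
    set b := Module.finBasisOfFinrankEq ℂ W₂ hfr2' with hb
    have halt1 : ∀ v : W₂, (B.restrict W₂) v v = 0 := fun v => hBalt v
    have hxy : (B.restrict W₂) (b 0) (b 1) ≠ 0 := by
      intro h0
      refine Basis.ne_zero b 0 ((hndres W₂ hW₂inv).1 (b 0) ?_)
      intro w
      rw [alt_expand' b _ halt1 (b 0) w, h0, mul_zero]
    refine det_of_conformal' b _ halt1 hxy _ _ ?_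
    intro v w
    simp only [LinearMap.BilinForm.restrict_apply, LinearMap.restrict_coe_apply]
    exact heq g v w
end

section
/- Let V be a 4-dimensional complex symplectic space with form ⟨,⟩, G a group, μ: G → ℂ× a character, and φ: G → GL(V) a semisimple representation satisfying ⟨φ(g)v, φ(g)w⟩ = μ(g)⟨v,w⟩. Suppose φ stabilizes an isotropic line L ⊆ V on which G acts by a character χ. Then φ stabilizes another line L' with ⟨L, L'⟩ ≠ 0, G acts on L' by the character χ⁻¹·μ, and the plane L ⊕ L' is a nondegenerate G-invariant 2-dimensional subrepresentation whose determinant character equals μ. -/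
/-- If a semisimple `(G,μ)`-symplectic representation on a 4-dimensional space stabilizes
an isotropic line `L` affording the character `χ`, then it stabilizes another line `L'`
pairing nontrivially with `L`, affording `χ⁻¹·μ`, and `L ⊔ L'` is a nondegenerate
invariant 2-dimensional subrepresentation with determinant `μ`. -/
theorem isotropic_line_gives_endoscopic
    {G V : Type*} [Group G] [AddCommGroup V] [Module ℂ V] [FiniteDimensional ℂ V]
    (B : LinearMap.BilinForm ℂ V)
    (hBalt : ∀ v, B v v = 0) (hBnd : B.Nondegenerate)
    (hdim : Module.finrank ℂ V = 4)
    (φ : Representation ℂ G V) (μ χ : G →* ℂˣ)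
    (hss : ∀ W : Submodule ℂ V, (∀ g : G, ∀ v ∈ W, φ g v ∈ W) →
      ∃ U : Submodule ℂ V, (∀ g : G, ∀ v ∈ U, φ g v ∈ U) ∧ IsCompl W U)
    (heq : ∀ g v w, B (φ g v) (φ g w) = (μ g : ℂ) * B v w)
    (L : Submodule ℂ V) (hL : Module.finrank ℂ L = 1)
    (hLiso : ∀ v ∈ L, ∀ w ∈ L, B v w = 0)
    (hLchi : ∀ g : G, ∀ v ∈ L, φ g v = (χ g : ℂ) • v) :
    ∃ L' : Submodule ℂ V, Module.finrank ℂ L' = 1 ∧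
      (∃ v ∈ L, ∃ v' ∈ L', B v v' ≠ 0) ∧
      (∀ g : G, ∀ v ∈ L', φ g v = ((χ g : ℂ)⁻¹ * (μ g : ℂ)) • v) ∧
      Module.finrank ℂ (L ⊔ L' : Submodule ℂ V) = 2 ∧
      (∀ v ∈ (L ⊔ L' : Submodule ℂ V), (∀ w ∈ (L ⊔ L' : Submodule ℂ V), B v w = 0) → v = 0) ∧
      ∃ h : ∀ g : G, ∀ v ∈ (L ⊔ L' : Submodule ℂ V), φ g v ∈ (L ⊔ L' : Submodule ℂ V),
        ∀ g : G, LinearMap.det ((φ g).restrict (h g)) = (μ g : ℂ) := by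
  classical
  -- skew symmetry
  have hskew : ∀ v w, B v w = - B w v := by
    intro v w
    have h := hBalt (v + w)
    simp only [map_add, LinearMap.add_apply, hBalt] at h
    linear_combination h
  -- generator of L
  have hLne : L ≠ ⊥ := by
    intro h
    rw [h] at hL
    simp at hL
  obtain ⟨e, heL, he0⟩ := Submodule.exists_mem_ne_zero_of_ne_bot hLne
  have hLe : L = Submodule.span ℂ {e} := by
    refine (Submodule.eq_of_le_of_finrank_eq ?_ ?_).symm
    · rwa [Submodule.span_singleton_le_iff_mem]
    · rw [hL, finrank_span_singleton he0]
  -- the kernel of B e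
  set W : Submodule ℂ V := LinearMap.ker (B e) with hW
  have hmemW : ∀ v, v ∈ W ↔ B e v = 0 := fun v => LinearMap.mem_ker
  have hWinv : ∀ g : G, ∀ v ∈ W, φ g v ∈ W := by
    intro g v hv
    rw [hmemW] at hv ⊢
    have h1 : B (φ g (φ g⁻¹ e)) (φ g v) = (μ g : ℂ) * B (φ g⁻¹ e) v := heq g _ v
    have h2 : φ g (φ g⁻¹ e) = e := by
      have : φ g * φ g⁻¹ = 1 := by rw [← map_mul]; simp
      calc φ g (φ g⁻¹ e) = (φ g * φ g⁻¹) e := rfl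
      _ = e := by rw [this]; rfl
    have h3 : φ g⁻¹ e = ((χ g⁻¹ : ℂˣ) : ℂ) • e := hLchi g⁻¹ e heL
    rw [h2, h3] at h1
    simp only [map_smul, LinearMap.smul_apply, smul_eq_mul] at h1
    rw [h1, hv]
    ring
  have hLW : L ≤ W := by
    intro v hv
    rw [hmemW, hskew]
    rw [hLiso v hv e heL]
    ring
  -- finrank W = 3
  have hBe0 : B e ≠ 0 := by
    intro h
    exact he0 (hBnd.1 e (fun n => by rw [h]; rfl))
  have hWrank : Module.finrank ℂ W = 3 := by
    have h1 := LinearMap.finrank_range_add_finrank_ker (B e)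
    have h2 : Module.finrank ℂ (LinearMap.range (B e)) = 1 := by
      have h3 : LinearMap.range (B e) ≠ ⊥ := by
        rwa [Ne, LinearMap.range_eq_bot]
      have h4 : Module.finrank ℂ (LinearMap.range (B e)) ≤ 1 := by
        have := Submodule.finrank_le (LinearMap.range (B e))
        simpa using this
      have h5 : Module.finrank ℂ (LinearMap.range (B e)) ≠ 0 := by
        rw [Ne, Submodule.finrank_eq_zero]
        exact h3
      omega
    rw [h2, hdim] at h1
    rw [hW]
    omega
  -- invariant complement
  obtain ⟨L', hL'inv, hcompl⟩ := hss W hWinv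
  have hL'rank : Module.finrank ℂ L' = 1 := by
    have := Submodule.finrank_add_eq_of_isCompl hcompl
    rw [hWrank, hdim] at this
    omega
  -- generator of L'
  have hL'ne : L' ≠ ⊥ := by
    intro h
    rw [h] at hL'rank
    simp at hL'rank
  obtain ⟨v', hv'L', hv'0⟩ := Submodule.exists_mem_ne_zero_of_ne_bot hL'ne
  have hL'v' : L' = Submodule.span ℂ {v'} := by
    refine (Submodule.eq_of_le_of_finrank_eq ?_ ?_).symm
    · rwa [Submodule.span_singleton_le_iff_mem]
    · rw [hL'rank, finrank_span_singleton hv'0]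
  have hBev' : B e v' ≠ 0 := by
    intro h
    have : v' ∈ W ⊓ L' := ⟨(hmemW v').2 h, hv'L'⟩
    rw [hcompl.inf_eq_bot] at this
    exact hv'0 this
  -- character on L'
  have hchar : ∀ g : G, ∀ v ∈ L', φ g v = ((χ g : ℂ)⁻¹ * (μ g : ℂ)) • v := by
    have key : ∀ g : G, φ g v' = ((χ g : ℂ)⁻¹ * (μ g : ℂ)) • v' := by
      intro g
      have hmem : φ g v' ∈ L' := hL'inv g v' hv'L'
      rw [hL'v', Submodule.mem_span_singleton] at hmem
      obtain ⟨c, hc⟩ := hmem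
      have h1 : B (φ g e) (φ g v') = (μ g : ℂ) * B e v' := heq g e v'
      rw [hLchi g e heL, ← hc] at h1
      simp only [map_smul, LinearMap.smul_apply, smul_eq_mul] at h1
      have hχ : (χ g : ℂ) ≠ 0 := Units.ne_zero (χ g)
      have hcc : (c * (χ g : ℂ)) * B e v' = (μ g : ℂ) * B e v' := by
        linear_combination h1
      have hc2 : c * (χ g : ℂ) = (μ g : ℂ) := mul_right_cancel₀ hBev' hcc
      have hcval : c = (χ g : ℂ)⁻¹ * (μ g : ℂ) := by
        field_simp
        linear_combination hc2
      rw [← hc, hcval]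
    intro g v hv
    rw [hL'v', Submodule.mem_span_singleton] at hv
    obtain ⟨t, ht⟩ := hv
    rw [← ht, map_smul, key g, smul_comm]
  -- L ⊓ L' = ⊥
  have hinf : L ⊓ L' = ⊥ := by
    rw [← le_bot_iff, ← hcompl.inf_eq_bot]
    exact inf_le_inf_right L' hLW
  have hsuprank : Module.finrank ℂ (L ⊔ L' : Submodule ℂ V) = 2 := by
    have := Submodule.finrank_sup_add_finrank_inf_eq L L'
    rw [hinf, hL, hL'rank] at this
    simpa using this
  -- membership decomposition of the plane
  have hmemP : ∀ v ∈ (L ⊔ L' : Submodule ℂ V), ∃ a b : ℂ, v = a • e + b • v' := by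
    intro v hv
    rw [Submodule.mem_sup] at hv
    obtain ⟨x, hx, y, hy, hxy⟩ := hv
    rw [hLe, Submodule.mem_span_singleton] at hx
    rw [hL'v', Submodule.mem_span_singleton] at hy
    obtain ⟨a, ha⟩ := hx
    obtain ⟨b, hb⟩ := hy
    exact ⟨a, b, by rw [← hxy, ← ha, ← hb]⟩
  have heP : e ∈ (L ⊔ L' : Submodule ℂ V) := Submodule.mem_sup_left heL
  have hv'P : v' ∈ (L ⊔ L' : Submodule ℂ V) := Submodule.mem_sup_right hv'L'
  -- nondegeneracy
  have hnd : ∀ v ∈ (L ⊔ L' : Submodule ℂ V),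
      (∀ w ∈ (L ⊔ L' : Submodule ℂ V), B v w = 0) → v = 0 := by
    intro v hv h0
    obtain ⟨a, b, hab⟩ := hmemP v hv
    have h1 := h0 e heP
    have h2 := h0 v' hv'P
    rw [hab] at h1 h2
    simp only [map_add, map_smul, LinearMap.add_apply, LinearMap.smul_apply,
      smul_eq_mul, hBalt] at h1 h2
    have hb : b = 0 := by
      have hz : b * B e v' = 0 := by
        first
          | linear_combination -h1 + b * hskew v' e
          | linear_combination h1 + b * hskew v' e
          | linear_combination -h1 - b * hskew v' e
          | linear_combination h1 - b * hskew v' e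
      rcases mul_eq_zero.mp hz with h | h
      · exact h
      · exact absurd h hBev'
    have ha : a = 0 := by
      have hz : a * B e v' = 0 := by
        first
          | linear_combination h2
          | linear_combination -h2
          | linear_combination h2 - b * hBalt v'
          | linear_combination h2 + b * hBalt v'
      rcases mul_eq_zero.mp hz with h | h
      · exact h
      · exact absurd h hBev'
    rw [hab, ha, hb]
    simp
  -- invariance of the plane
  have hinvP : ∀ g : G, ∀ v ∈ (L ⊔ L' : Submodule ℂ V), φ g v ∈ (L ⊔ L' : Submodule ℂ V) := by
    intro g v hv
    rw [Submodule.mem_sup] at hv ⊢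
    obtain ⟨x, hx, y, hy, hxy⟩ := hv
    refine ⟨φ g x, ?_, φ g y, hL'inv g y hy, by rw [← hxy, map_add]⟩
    rw [hLchi g x hx]
    exact Submodule.smul_mem L _ hx
  refine ⟨L', hL'rank, ⟨e, heL, v', hv'L', hBev'⟩, hchar, hsuprank, hnd, hinvP, ?_⟩
  -- determinant computation
  intro g
  set P := (L ⊔ L' : Submodule ℂ V) with hP
  set p1 : P := ⟨e, heP⟩ with hp1
  set p2 : P := ⟨v', hv'P⟩ with hp2
  have hli : LinearIndependent ℂ ![p1, p2] := by
    rw [LinearIndependent.pair_iff]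
    intro a b hab
    have hab' : a • e + b • v' = 0 := by
      have := congrArg (Subtype.val) hab
      simpa using this
    have h1 : B e (a • e + b • v') = 0 := by rw [hab']; simp
    simp only [map_add, map_smul, smul_eq_mul, hBalt] at h1
    have hb : b = 0 := by
      have hz : b * B e v' = 0 := by
        first
          | linear_combination h1
          | linear_combination -h1
          | linear_combination h1 - a * hBalt e
          | linear_combination h1 + a * hBalt e
      rcases mul_eq_zero.mp hz with h | h
      · exact h
      · exact absurd h hBev'
    have ha : a = 0 := by
      rw [hb] at hab'
      simp only [zero_smul, add_zero, smul_eq_zero] at hab'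
      rcases hab' with h | h
      · exact h
      · exact absurd h he0
    exact ⟨ha, hb⟩
  have hcard : Fintype.card (Fin 2) = Module.finrank ℂ P := by
    rw [hsuprank]; rfl
  let bP : Module.Basis (Fin 2) ℂ P := basisOfLinearIndependentOfCardEqFinrank hli hcard
  have hbP : ∀ i, bP i = ![p1, p2] i := fun i => by
    rw [coe_basisOfLinearIndependentOfCardEqFinrank]
  have hf0 : ((φ g).restrict (hinvP g)) (bP 0) = (χ g : ℂ) • bP 0 := by
    apply Subtype.ext
    rw [hbP 0]
    show φ g e = (χ g : ℂ) • e
    exact hLchi g e heL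
  have hf1 : ((φ g).restrict (hinvP g)) (bP 1) =
      ((χ g : ℂ)⁻¹ * (μ g : ℂ)) • bP 1 := by
    apply Subtype.ext
    rw [hbP 1]
    show φ g v' = ((χ g : ℂ)⁻¹ * (μ g : ℂ)) • v'
    exact hchar g v' hv'L'
  rw [← LinearMap.det_toMatrix bP]
  have hmat : LinearMap.toMatrix bP bP ((φ g).restrict (hinvP g)) =
      Matrix.diagonal ![(χ g : ℂ), (χ g : ℂ)⁻¹ * (μ g : ℂ)] := by
    ext i j
    rw [LinearMap.toMatrix_apply]
    fin_cases j <;> fin_cases i <;>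
      simp [hf0, hf1, Matrix.diagonal, Module.Basis.repr_self, Finsupp.single_apply]
  rw [hmat, Matrix.det_diagonal]
  have hχ : (χ g : ℂ) ≠ 0 := Units.ne_zero (χ g)
  have hχ' : (χ g : ℂ) * ((χ g : ℂ)⁻¹ * (μ g : ℂ)) = (μ g : ℂ) := by
    field_simp
  simpa [Fin.prod_univ_two] using hχ'
end

section
/- Let V be a 4-dimensional complex symplectic space, G a group, μ: G → ℂ× a character, and φ: G → GL(V) a semisimple representation preserving the symplectic form up to μ. Suppose φ stabilizes a 2-dimensional isotropic subspace but no line. Then V ≅ W ⊕ (W∨ ⊗ μ) as G-representations, where W is an irreducible 2-dimensional representation; in particular φ ≅ ρ ⊕ (ρ ⊗ χ) where ρ = W and χ = μ·(det ρ)⁻¹. -/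
/-- A semisimple `(G,μ)`-symplectic representation on a 4-dimensional space stabilizing a
2-dimensional isotropic subspace but no line is of the form `W ⊕ (W∨ ⊗ μ)` for an
irreducible 2-dimensional `W`; equivalently `φ ≅ ρ ⊕ (ρ ⊗ χ)` with `χ = μ·(det ρ)⁻¹`. -/
theorem isotropic_plane_parameter_structure
    {G V : Type*} [Group G] [AddCommGroup V] [Module ℂ V] [FiniteDimensional ℂ V]
    (B : LinearMap.BilinForm ℂ V)
    (hBalt : ∀ v, B v v = 0) (hBnd : B.Nondegenerate)
    (hdim : Module.finrank ℂ V = 4)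
    (φ : Representation ℂ G V) (μ : G →* ℂˣ)
    (hss : ∀ W : Submodule ℂ V, (∀ g : G, ∀ v ∈ W, φ g v ∈ W) →
      ∃ U : Submodule ℂ V, (∀ g : G, ∀ v ∈ U, φ g v ∈ U) ∧ IsCompl W U)
    (heq : ∀ g v w, B (φ g v) (φ g w) = (μ g : ℂ) * B v w)
    (hplane : ∃ P : Submodule ℂ V, Module.finrank ℂ P = 2 ∧
      (∀ v ∈ P, ∀ w ∈ P, B v w = 0) ∧ (∀ g : G, ∀ v ∈ P, φ g v ∈ P))
    (hnoline : ¬ ∃ L : Submodule ℂ V, Module.finrank ℂ L = 1 ∧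
      (∀ g : G, ∀ v ∈ L, φ g v ∈ L)) :
    ∃ (W : Submodule ℂ V) (hW : ∀ g : G, ∀ v ∈ W, φ g v ∈ W),
      Module.finrank ℂ W = 2 ∧
      (∀ U : Submodule ℂ V, U ≤ W → (∀ g : G, ∀ v ∈ U, φ g v ∈ U) → U = ⊥ ∨ U = W) ∧
      -- V ≅ W ⊕ (W∨ ⊗ μ) as G-representations
      (∃ e : V ≃ₗ[ℂ] (W × Module.Dual ℂ W), ∀ (g : G) (v : V),
        e (φ g v) = ((φ g).restrict (hW g) (e v).1,
          (μ g : ℂ) • ((φ g⁻¹).restrict (hW g⁻¹)).dualMap (e v).2)) ∧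
      -- in particular φ ≅ ρ ⊕ (ρ ⊗ χ) with χ = μ·(det ρ)⁻¹
      (∃ e₂ : V ≃ₗ[ℂ] (W × W), ∀ (g : G) (v : V),
        e₂ (φ g v) = ((φ g).restrict (hW g) (e₂ v).1,
          ((μ g : ℂ) / LinearMap.det ((φ g).restrict (hW g))) •
            (φ g).restrict (hW g) (e₂ v).2)) := by
  classical
  obtain ⟨P, hP2, hPiso, hPinv⟩ := hplane
  obtain ⟨U, hUinv, hcompl⟩ := hss P hPinv
  have halt : B.IsAlt := hBalt
  have hrefl : B.IsRefl := halt.isRefl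
  -- the `φ g` maps restricted to P, and basic facts
  set ρ : G → (P →ₗ[ℂ] P) := fun g => (φ g).restrict (hPinv g) with hρ
  have hρval : ∀ (g : G) (p : P), (ρ g p : V) = φ g (p : V) := fun g p => rfl
  have hρinv : ∀ (g : G) (p : P), ρ g (ρ g⁻¹ p) = p := by
    intro g p
    apply Subtype.ext
    rw [hρval, hρval]
    calc φ g (φ g⁻¹ (p : V)) = (φ g * φ g⁻¹) (p : V) := rfl
      _ = φ (g * g⁻¹) (p : V) := by rw [map_mul]
      _ = (p : V) := by simp
  have hρcomp : ∀ g : G, (ρ g) ∘ₗ (ρ g⁻¹) = LinearMap.id := by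
    intro g; ext p; simpa using congrArg Subtype.val (hρinv g p)
  have hdetρ : ∀ g : G, LinearMap.det (ρ g) ≠ 0 := by
    intro g
    have h1 : LinearMap.det (ρ g) * LinearMap.det (ρ g⁻¹) = 1 := by
      rw [← LinearMap.det_comp, hρcomp, LinearMap.det_id]
    intro h0
    rw [h0, zero_mul] at h1
    exact zero_ne_one h1
  -- P is its own orthogonal complement
  have horth : B.orthogonal P = P := by
    have hle : P ≤ B.orthogonal P := by
      intro x hx
      rw [LinearMap.BilinForm.mem_orthogonal_iff]
      intro n hn
      exact hPiso n hn x hx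
    have hfr := LinearMap.BilinForm.finrank_orthogonal hBnd P
    rw [hdim, hP2] at hfr
    exact (Submodule.eq_of_le_of_finrank_le hle (by rw [hfr, hP2])).symm
  -- finrank of U
  have hU2 : Module.finrank ℂ U = 2 := by
    have := Submodule.finrank_add_eq_of_isCompl hcompl
    rw [hdim, hP2] at this
    omega
  -- the pairing U → Dual P
  set f : U →ₗ[ℂ] Module.Dual ℂ P := P.subtype.dualMap ∘ₗ B.flip ∘ₗ U.subtype with hf
  have hfapp : ∀ (u : U) (w : P), f u w = B (w : V) (u : V) := fun u w => rfl
  have hfinj : Function.Injective f := by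
    rw [← LinearMap.ker_eq_bot, eq_bot_iff]
    intro u hu
    have hu0 : f u = 0 := hu
    have hmem : (u : V) ∈ B.orthogonal P := by
      rw [LinearMap.BilinForm.mem_orthogonal_iff]
      intro n hn
      have := LinearMap.congr_fun hu0 ⟨n, hn⟩
      simpa [hfapp] using this
    rw [horth] at hmem
    have : (u : V) ∈ P ⊓ U := ⟨hmem, u.2⟩
    rw [hcompl.inf_eq_bot] at this
    exact (Submodule.mem_bot ℂ).mpr (Subtype.ext (by simpa using this))
  have hfbij : Function.Bijective f := by
    refine ⟨hfinj, ?_⟩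
    rw [← LinearMap.injective_iff_surjective_of_finrank_eq_finrank ?_]
    · exact hfinj
    · rw [hU2, Subspace.dual_finrank_eq, hP2]
  set fe : U ≃ₗ[ℂ] Module.Dual ℂ P := LinearEquiv.ofBijective f hfbij with hfe
  set π : (P × U) ≃ₗ[ℂ] V := Submodule.prodEquivOfIsCompl P U hcompl with hπ
  have hπapp : ∀ (p : P) (u : U), π (p, u) = (p : V) + (u : V) := by
    intro p u
    rw [hπ, Submodule.coe_prodEquivOfIsCompl']
  set e : V ≃ₗ[ℂ] (P × Module.Dual ℂ P) :=
    π.symm.trans ((LinearEquiv.refl ℂ P).prodCongr fe) with he_def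
  -- equivariance of e
  have he : ∀ (g : G) (v : V),
      e (φ g v) = (ρ g (e v).1, (μ g : ℂ) • (ρ g⁻¹).dualMap (e v).2) := by
    intro g v
    obtain ⟨p, u, hv⟩ : ∃ (p : P) (u : U), v = (p : V) + (u : V) := by
      refine ⟨(π.symm v).1, (π.symm v).2, ?_⟩
      conv_lhs => rw [← π.apply_symm_apply v]
      rw [← hπapp]
    have hsymm : π.symm v = (p, u) := by
      rw [LinearEquiv.symm_apply_eq, hπapp, hv]
    have hgp : φ g (p : V) ∈ P := hPinv g _ p.2
    have hgu : φ g (u : V) ∈ U := hUinv g _ u.2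
    have hsymm2 : π.symm (φ g v) = (⟨φ g (p : V), hgp⟩, ⟨φ g (u : V), hgu⟩) := by
      rw [LinearEquiv.symm_apply_eq, hπapp, hv, map_add]
    have heval : ∀ x : V, e x = ((π.symm x).1, fe (π.symm x).2) := fun x => rfl
    rw [heval, heval, hsymm, hsymm2]
    refine Prod.ext ?_ ?_
    · apply Subtype.ext
      rfl
    · show fe ⟨φ g (u : V), hgu⟩ = (μ g : ℂ) • (ρ g⁻¹).dualMap (fe u)
      apply LinearMap.ext
      intro w
      have hkey := heq g ((φ g⁻¹) (w : V)) (u : V)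
      have hw : φ g (φ g⁻¹ (w : V)) = (w : V) := by
        calc φ g (φ g⁻¹ (w : V)) = (φ g * φ g⁻¹) (w : V) := rfl
          _ = φ (g * g⁻¹) (w : V) := by rw [map_mul]
          _ = (w : V) := by simp
      rw [hw] at hkey
      show f ⟨φ g (u : V), hgu⟩ w = ((μ g : ℂ) • (ρ g⁻¹).dualMap (f u)) w
      rw [hfapp]
      simp only [LinearMap.smul_apply, LinearMap.dualMap_apply, smul_eq_mul]
      rw [hfapp]
      exact hkey
  -- irreducibility of P
  have hirr : ∀ U' : Submodule ℂ V, U' ≤ P → (∀ g : G, ∀ v ∈ U', φ g v ∈ U') →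
      U' = ⊥ ∨ U' = P := by
    intro U' hle hinv
    have hd : Module.finrank ℂ U' ≤ 2 := hP2 ▸ Submodule.finrank_mono hle
    have hcases : Module.finrank ℂ U' = 0 ∨ Module.finrank ℂ U' = 1 ∨
        Module.finrank ℂ U' = 2 := by omega
    rcases hcases with h | h | h
    · left; exact Submodule.finrank_eq_zero.mp h
    · exact absurd ⟨U', h, hinv⟩ hnoline
    · right; exact Submodule.eq_of_le_of_finrank_le hle (by rw [h, hP2])
  -- the symplectic-type form on P
  set b : Module.Basis (Fin 2) ℂ P := Module.finBasisOfFinrankEq ℂ P hP2 with hb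
  set ωB : P →ₗ[ℂ] Module.Dual ℂ P := LinearMap.mk₂ ℂ
      (fun x y => b.repr x 0 * b.repr y 1 - b.repr x 1 * b.repr y 0)
      (by intro x x' y; simp; ring)
      (by intro c x y; simp; ring)
      (by intro x y y'; simp; ring)
      (by intro c x y; simp; ring) with hω
  have hωapp : ∀ x y : P, ωB x y = b.repr x 0 * b.repr y 1 - b.repr x 1 * b.repr y 0 :=
    fun x y => rfl
  have hrep : ∀ (φ' : P →ₗ[ℂ] P) (x : P) (i : Fin 2), b.repr (φ' x) i =
      (LinearMap.toMatrix b b φ') i 0 * b.repr x 0 +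
        (LinearMap.toMatrix b b φ') i 1 * b.repr x 1 := by
    intro φ' x i
    rw [← LinearMap.toMatrix_mulVec_repr b b φ' x]
    simp [Matrix.mulVec, dotProduct, Fin.sum_univ_two]
  have hdetω : ∀ (φ' : P →ₗ[ℂ] P) (x y : P),
      ωB (φ' x) (φ' y) = LinearMap.det φ' * ωB x y := by
    intro φ' x y
    rw [hωapp, hωapp, ← LinearMap.det_toMatrix b φ', Matrix.det_fin_two,
      hrep, hrep, hrep, hrep]
    ring
  have hωinj : Function.Injective ωB := by
    rw [← LinearMap.ker_eq_bot, eq_bot_iff]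
    intro w hw
    have hw0 : ωB w = 0 := hw
    have h1 : b.repr w 0 = 0 := by
      have := LinearMap.congr_fun hw0 (b 1)
      simpa [hωapp, Module.Basis.repr_self] using this
    have h0 : b.repr w 1 = 0 := by
      have := LinearMap.congr_fun hw0 (b 0)
      simpa [hωapp, Module.Basis.repr_self] using this
    have : b.repr w = b.repr 0 := by
      ext i
      fin_cases i
      · simpa using h1
      · simpa using h0
    simpa using b.repr.injective this
  have hωbij : Function.Bijective ωB := by
    refine ⟨hωinj, ?_⟩
    rw [← LinearMap.injective_iff_surjective_of_finrank_eq_finrank ?_]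
    · exact hωinj
    · rw [Subspace.dual_finrank_eq]
  set j : P ≃ₗ[ℂ] Module.Dual ℂ P := LinearEquiv.ofBijective ωB hωbij with hj
  set e₂ : V ≃ₗ[ℂ] (P × P) := e.trans ((LinearEquiv.refl ℂ P).prodCongr j.symm) with he₂def
  have he₂eval : ∀ x : V, e₂ x = ((e x).1, j.symm (e x).2) := fun x => rfl
  refine ⟨P, hPinv, hP2, hirr, ⟨e, he⟩, ⟨e₂, ?_⟩⟩
  intro g v
  rw [he₂eval, he₂eval, he g v]
  refine Prod.ext rfl ?_
  show j.symm ((μ g : ℂ) • (ρ g⁻¹).dualMap (e v).2) =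
      ((μ g : ℂ) / LinearMap.det (ρ g)) • ρ g (j.symm (e v).2)
  set w : P := j.symm (e v).2 with hwdef
  have hjw : (e v).2 = ωB w := by
    rw [hwdef]
    exact (j.apply_symm_apply (e v).2).symm
  rw [LinearEquiv.symm_apply_eq, hjw]
  show (μ g : ℂ) • (ρ g⁻¹).dualMap (ωB w) = ωB (((μ g : ℂ) / LinearMap.det (ρ g)) • ρ g w)
  apply LinearMap.ext
  intro x
  simp only [LinearMap.smul_apply, LinearMap.dualMap_apply, smul_eq_mul, map_smul,
    LinearMap.map_smul₂]
  have hx : ρ g (ρ g⁻¹ x) = x := hρinv g x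
  have hk : ωB (ρ g w) x = LinearMap.det (ρ g) * ωB w (ρ g⁻¹ x) := by
    conv_lhs => rw [← hx]
    exact hdetω (ρ g) w (ρ g⁻¹ x)
  rw [hk]
  field_simp [hdetρ g]
end

section
/- Let D be a quaternion algebra over a field F of characteristic 0, with reduced norm N and conjugation x ↦ x̄. For (α,β) ∈ D× × D×, the F-linear map ρ(α,β): D → D given by x ↦ α x β̄ satisfies N(ρ(α,β)(x)) = N(α)N(β)·N(x), and the kernel of the resulting homomorphism D× × D× → GO(D, N) is {(z, z⁻¹) : z ∈ F×}. -/
open Quaternion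

/-- The reduced norm on a quaternion algebra `D` over a field `F` of characteristic 0:
`N x = (x * x̄).re`. -/
noncomputable def quatNorm {F : Type*} [Field F] (c₁ c₂ : F)
    (x : QuaternionAlgebra F c₁ 0 c₂) : F := (x * star x).re

lemma quatNorm_mul {F : Type*} [Field F] (c₁ c₂ : F) (x y : QuaternionAlgebra F c₁ 0 c₂) :
    quatNorm c₁ c₂ (x * y) = quatNorm c₁ c₂ x * quatNorm c₁ c₂ y := by
  simp only [quatNorm, QuaternionAlgebra.re_mul, QuaternionAlgebra.imI_mul,
    QuaternionAlgebra.imJ_mul, QuaternionAlgebra.imK_mul, QuaternionAlgebra.re_star,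
    QuaternionAlgebra.imI_star, QuaternionAlgebra.imJ_star, QuaternionAlgebra.imK_star]
  ring

lemma quatNorm_star {F : Type*} [Field F] (c₁ c₂ : F) (x : QuaternionAlgebra F c₁ 0 c₂) :
    quatNorm c₁ c₂ (star x) = quatNorm c₁ c₂ x := by
  simp only [quatNorm, star_star, QuaternionAlgebra.re_mul, QuaternionAlgebra.re_star,
    QuaternionAlgebra.imI_star, QuaternionAlgebra.imJ_star, QuaternionAlgebra.imK_star]
  ring

lemma scalar_of_commutes {F : Type*} [Field F] [CharZero F] {c₁ c₂ : F}
    (hc₁ : c₁ ≠ 0) (hc₂ : c₂ ≠ 0) {α : QuaternionAlgebra F c₁ 0 c₂}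
    (h : ∀ x : QuaternionAlgebra F c₁ 0 c₂, α * x = x * α) :
    α = (α.re : QuaternionAlgebra F c₁ 0 c₂) := by
  have hi := h ⟨0,1,0,0⟩
  have hj := h ⟨0,0,1,0⟩
  rw [QuaternionAlgebra.ext_iff] at hi hj
  simp only [QuaternionAlgebra.re_mul, QuaternionAlgebra.imI_mul, QuaternionAlgebra.imJ_mul,
    QuaternionAlgebra.imK_mul, mul_zero, mul_one, zero_mul, one_mul, add_zero, zero_add,
    sub_zero, zero_sub, neg_zero] at hi hj
  obtain ⟨-, -, hi3, hi4⟩ := hi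
  obtain ⟨-, -, -, hj4⟩ := hj
  have hd : α.imK = 0 := by
    have h2 : (2 : F) * (c₁ * α.imK) = 0 := by linear_combination -hi3
    rcases mul_eq_zero.mp h2 with h | h
    · exact absurd h two_ne_zero
    · rcases mul_eq_zero.mp h with h | h
      · exact absurd h hc₁
      · exact h
  have hc : α.imJ = 0 := by
    have h2 : (2 : F) * α.imJ = 0 := by linear_combination -hi4
    rcases mul_eq_zero.mp h2 with h | h
    · exact absurd h two_ne_zero
    · exact h
  have hb : α.imI = 0 := by
    have h2 : (2 : F) * α.imI = 0 := by linear_combination hj4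
    rcases mul_eq_zero.mp h2 with h | h
    · exact absurd h two_ne_zero
    · exact h
  ext <;> simp [hb, hc, hd]

/-- For `(α, β) ∈ D× × D×`, the map `ρ(α,β) : x ↦ α x β̄` on a quaternion algebra `D`
satisfies `N(ρ(α,β)(x)) = N(α)N(β)N(x)`, and the kernel of the resulting homomorphism
`D× × D× → GO(D, N)` is `{(z, z⁻¹) : z ∈ F×}`. -/
theorem quaternion_similitude_action
    {F : Type*} [Field F] [CharZero F] (c₁ c₂ : F) (hc₁ : c₁ ≠ 0) (hc₂ : c₂ ≠ 0) :
    (∀ (α β : (QuaternionAlgebra F c₁ 0 c₂)ˣ) (x : QuaternionAlgebra F c₁ 0 c₂),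
      quatNorm c₁ c₂ ((α : QuaternionAlgebra F c₁ 0 c₂) * x * star (β : QuaternionAlgebra F c₁ 0 c₂))
        = quatNorm c₁ c₂ (α : QuaternionAlgebra F c₁ 0 c₂) *
          quatNorm c₁ c₂ (β : QuaternionAlgebra F c₁ 0 c₂) * quatNorm c₁ c₂ x) ∧
    (∀ α β : (QuaternionAlgebra F c₁ 0 c₂)ˣ,
      (∀ x : QuaternionAlgebra F c₁ 0 c₂,
        (α : QuaternionAlgebra F c₁ 0 c₂) * x * star (β : QuaternionAlgebra F c₁ 0 c₂) = x)
      ↔ ∃ z : Fˣ, (α : QuaternionAlgebra F c₁ 0 c₂) = algebraMap F (QuaternionAlgebra F c₁ 0 c₂) z ∧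
          (β : QuaternionAlgebra F c₁ 0 c₂)
            = algebraMap F (QuaternionAlgebra F c₁ 0 c₂) ((z⁻¹ : Fˣ) : F)) := by
  constructor
  · intro α β x
    rw [quatNorm_mul, quatNorm_mul, quatNorm_star]
    ring
  · intro α β
    constructor
    · intro h
      have h1 : (α : QuaternionAlgebra F c₁ 0 c₂) * star (β : QuaternionAlgebra F c₁ 0 c₂) = 1 := by
        simpa using h 1
      have hinv : ((α⁻¹ : (QuaternionAlgebra F c₁ 0 c₂)ˣ) : QuaternionAlgebra F c₁ 0 c₂)
          = star (β : QuaternionAlgebra F c₁ 0 c₂) := Units.inv_eq_of_mul_eq_one_right h1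
      have hcomm : ∀ x : QuaternionAlgebra F c₁ 0 c₂,
          (α : QuaternionAlgebra F c₁ 0 c₂) * x = x * (α : QuaternionAlgebra F c₁ 0 c₂) := by
        intro x
        have hx := h x
        rw [← hinv] at hx
        have := congrArg (· * (α : QuaternionAlgebra F c₁ 0 c₂)) hx
        simpa [mul_assoc] using this
      have hs := scalar_of_commutes hc₁ hc₂ hcomm
      set a := (α : QuaternionAlgebra F c₁ 0 c₂).re with ha
      have hre : a ≠ 0 := by
        intro h0
        have : (α : QuaternionAlgebra F c₁ 0 c₂) = 0 := by rw [hs, h0]; simp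
        exact α.ne_zero this
      refine ⟨Units.mk0 a hre, ?_, ?_⟩
      · rw [QuaternionAlgebra.coe_algebraMap]
        exact hs
      · have hainv : ((α⁻¹ : (QuaternionAlgebra F c₁ 0 c₂)ˣ) : QuaternionAlgebra F c₁ 0 c₂)
            = ((a⁻¹ : F) : QuaternionAlgebra F c₁ 0 c₂) := by
          refine Units.inv_eq_of_mul_eq_one_right ?_
          rw [hs, ← QuaternionAlgebra.coe_mul, mul_inv_cancel₀ hre, QuaternionAlgebra.coe_one]
        have : star (β : QuaternionAlgebra F c₁ 0 c₂) = ((a⁻¹ : F) : QuaternionAlgebra F c₁ 0 c₂) := by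
          rw [← hinv, hainv]
        have hb := congrArg star this
        rw [star_star, QuaternionAlgebra.star_coe] at hb
        rw [hb, QuaternionAlgebra.coe_algebraMap]
        simp
    · rintro ⟨z, hα, hβ⟩ x
      rw [hα, hβ, QuaternionAlgebra.coe_algebraMap]
      show ((z : F) : QuaternionAlgebra F c₁ 0 c₂) * x * star (((z⁻¹ : Fˣ) : F) : QuaternionAlgebra F c₁ 0 c₂) = x
      rw [QuaternionAlgebra.star_coe, mul_assoc, QuaternionAlgebra.coe_commutes,
        mul_assoc, ← QuaternionAlgebra.coe_mul]
      simp
end
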